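/- Let f : I → I be a unimodal map with critical point ζ, and suppose there exists a subinterval Y containing ζ in its interior such that for Lebesgue almost every x ∈ Y, the closure of the orbit of x contains Y (equivalently, the orbit of x intersects Y in a set whose closure has full measure in Y). Then the closure C of the union of all forward iterates fⁿ(Y), n ≥ 0, is a finite union of compact intervals, is forward invariant, contains ζ in its interior, and the orbit of Lebesgue almost every x ∈ C is dense in C; in particular C is a metric attractor which is a transitive cycle of intervals. -/

import Mathlib

open MeasureTheory

/-- The forward orbit of a point. -/
def forwardOrbit (f : ℝ → ℝ) (x : ℝ) : Set ℝ := {w | ∃ n : ℕ, f^[n] x = w}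

/-- The image of a null set under a Lipschitz-on map is null. -/
lemma lipOn_image_null {K : NNReal} {g : ℝ → ℝ} {s : Set ℝ}
    (h : LipschitzOnWith K g s) (hs : volume s = 0) : volume (g '' s) = 0 := by
  have h1 := h.hausdorffMeasure_image_le (zero_le_one (α := ℝ))
  rw [MeasureTheory.hausdorffMeasure_real] at h1
  refine le_antisymm ?_ zero_le
  calc volume (g '' s) ≤ (K : ENNReal) ^ (1 : ℝ) * volume s := h1
  _ = 0 := by rw [hs, mul_zero]

/-- A nondegenerate closed interval is contained in the closure of its complement
of any finite set. -/
lemma icc_subset_closure_diff_finite {c d : ℝ} (hcd : c < d) {F : Set ℝ} (hF : F.Finite) :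
    Set.Icc c d ⊆ closure (Set.Icc c d \ F) := by
  have hd : Dense Fᶜ := hF.countable.dense_compl ℝ
  have h1 : Set.Ioo c d ⊆ closure (Set.Ioo c d ∩ Fᶜ) :=
    hd.open_subset_closure_inter isOpen_Ioo
  have h2 : closure (Set.Ioo c d ∩ Fᶜ) ⊆ closure (Set.Icc c d \ F) :=
    closure_mono (fun x hx => ⟨Set.Ioo_subset_Icc_self hx.1, hx.2⟩)
  calc Set.Icc c d = closure (Set.Ioo c d) := (closure_Ioo hcd.ne).symm
  _ ⊆ closure (closure (Set.Ioo c d ∩ Fᶜ)) := closure_mono h1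
  _ = closure (Set.Ioo c d ∩ Fᶜ) := closure_closure
  _ ⊆ closure (Set.Icc c d \ F) := h2

/-- Let `f` be a unimodal map of `I = [p,q]` with critical point `ζ`, and let
`Y = [a,b]` be a subinterval containing `ζ` in its interior such that for a.e.
`x ∈ Y` the closure of the orbit of `x` contains `Y`.  Then
`C = closure (⋃ n, fⁿ(Y))` is a finite union of compact intervals, forward
invariant, contains `ζ` in its interior, and the orbit of a.e. `x ∈ C` is dense
in `C`: `C` is a metric attractor which is a transitive cycle of intervals. -/
theorem transitive_cycle_of_intervals (p q : ℝ) (hpq : p < q) (f : ℝ → ℝ) (ζ : ℝ)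
    (hC1 : ContDiff ℝ 1 f)
    (hmaps : Set.MapsTo f (Set.Icc p q) (Set.Icc p q))
    (hζ : ζ ∈ Set.Ioo p q)
    (hcrit : ∀ x ∈ Set.Icc p q, (deriv f x = 0 ↔ x = ζ))
    (hsign : ((∀ x ∈ Set.Ioo p ζ, 0 < deriv f x) ∧ ∀ x ∈ Set.Ioo ζ q, deriv f x < 0) ∨
             ((∀ x ∈ Set.Ioo p ζ, deriv f x < 0) ∧ ∀ x ∈ Set.Ioo ζ q, 0 < deriv f x))
    (hbd : f '' {p, q} ⊆ {p, q})
    (a b : ℝ) (hab : a < ζ ∧ ζ < b) (hY : Set.Icc a b ⊆ Set.Icc p q)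
    (hrec : ∀ᵐ x ∂(volume.restrict (Set.Icc a b)),
      Set.Icc a b ⊆ closure (forwardOrbit f x)) :
    ∃ C : Set ℝ, C = closure (⋃ n : ℕ, f^[n] '' Set.Icc a b) ∧
      (∃ S : Finset (ℝ × ℝ), (∀ r ∈ S, r.1 ≤ r.2) ∧
        C = ⋃ r ∈ S, Set.Icc r.1 r.2) ∧
      Set.MapsTo f C C ∧ ζ ∈ interior C ∧
      ∀ᵐ x ∂(volume.restrict C), C ⊆ closure (forwardOrbit f x) := by
  classical
  obtain ⟨haζ, hζb⟩ := hab
  have hax : a < b := haζ.trans hζb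
  have hfc : Continuous f := hC1.continuous
  have hmapsn : ∀ n : ℕ, Set.MapsTo (f^[n]) (Set.Icc p q) (Set.Icc p q) := fun n => hmaps.iterate n
  have hcont : ∀ n : ℕ, Continuous (f^[n]) := fun n => hfc.iterate n
  have himsub : ∀ n : ℕ, f^[n] '' Set.Icc a b ⊆ Set.Icc p q :=
    fun n => (Set.image_mono hY).trans ((hmapsn n).image_subset)
  -- two distinct values on nondegenerate subintervals
  have htwo : ∀ u v : ℝ, u < v → Set.Icc u v ⊆ Set.Icc p q →
      ∃ s ∈ Set.Icc u v, ∃ t ∈ Set.Icc u v, f s ≠ f t := by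
    intro u v huv hsub
    have hu : u ∈ Set.Icc p q := hsub ⟨le_refl u, huv.le⟩
    have hv : v ∈ Set.Icc p q := hsub ⟨huv.le, le_refl v⟩
    rcases hsign with ⟨hl, hr⟩ | ⟨hl, hr⟩
    · have hm1 : StrictMonoOn f (Set.Icc p ζ) := by
        apply strictMonoOn_of_deriv_pos (convex_Icc p ζ) hfc.continuousOn
        intro x hx; rw [interior_Icc] at hx; exact hl x hx
      have hm2 : StrictAntiOn f (Set.Icc ζ q) := by
        apply strictAntiOn_of_deriv_neg (convex_Icc ζ q) hfc.continuousOn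
        intro x hx; rw [interior_Icc] at hx; exact hr x hx
      rcases le_or_gt v ζ with hvζ | hζv
      · exact ⟨u, ⟨le_refl u, huv.le⟩, v, ⟨huv.le, le_refl v⟩,
          (hm1 ⟨hu.1, huv.le.trans hvζ⟩ ⟨hv.1, hvζ⟩ huv).ne⟩
      rcases le_or_gt ζ u with hζu | huζ
      · exact ⟨u, ⟨le_refl u, huv.le⟩, v, ⟨huv.le, le_refl v⟩,
          (hm2 ⟨hζu, hu.2⟩ ⟨hζu.trans huv.le, hv.2⟩ huv).ne'⟩
      · exact ⟨u, ⟨le_refl u, huv.le⟩, ζ, ⟨huζ.le, hζv.le⟩,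
          (hm1 ⟨hu.1, huζ.le⟩ ⟨hζ.1.le, le_refl ζ⟩ huζ).ne⟩
    · have hm1 : StrictAntiOn f (Set.Icc p ζ) := by
        apply strictAntiOn_of_deriv_neg (convex_Icc p ζ) hfc.continuousOn
        intro x hx; rw [interior_Icc] at hx; exact hl x hx
      have hm2 : StrictMonoOn f (Set.Icc ζ q) := by
        apply strictMonoOn_of_deriv_pos (convex_Icc ζ q) hfc.continuousOn
        intro x hx; rw [interior_Icc] at hx; exact hr x hx
      rcases le_or_gt v ζ with hvζ | hζv
      · exact ⟨u, ⟨le_refl u, huv.le⟩, v, ⟨huv.le, le_refl v⟩,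
          (hm1 ⟨hu.1, huv.le.trans hvζ⟩ ⟨hv.1, hvζ⟩ huv).ne'⟩
      rcases le_or_gt ζ u with hζu | huζ
      · exact ⟨u, ⟨le_refl u, huv.le⟩, v, ⟨huv.le, le_refl v⟩,
          (hm2 ⟨hζu, hu.2⟩ ⟨hζu.trans huv.le, hv.2⟩ huv).ne⟩
      · exact ⟨u, ⟨le_refl u, huv.le⟩, ζ, ⟨huζ.le, hζv.le⟩,
          (hm1 ⟨hu.1, huζ.le⟩ ⟨hζ.1.le, le_refl ζ⟩ huζ).ne'⟩
  -- each iterate image of Y is a nondegenerate interval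
  have hnondeg : ∀ n : ℕ, ∃ c d : ℝ, c < d ∧ f^[n] '' Set.Icc a b = Set.Icc c d := by
    intro n; induction n with
    | zero => exact ⟨a, b, hax, by simp⟩
    | succ n ih =>
      obtain ⟨c, d, hcd, heq⟩ := ih
      have himeq : f^[n+1] '' Set.Icc a b = f '' Set.Icc c d := by
        rw [Function.iterate_succ', Set.image_comp, heq]
      have hconn : IsConnected (f '' Set.Icc c d) :=
        ⟨(Set.nonempty_Icc.2 hcd.le).image f, isPreconnected_Icc.image f hfc.continuousOn⟩
      have hcomp : IsCompact (f '' Set.Icc c d) := isCompact_Icc.image hfc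
      have hIcc := eq_Icc_of_connected_compact hconn hcomp
      have hsubpq : Set.Icc c d ⊆ Set.Icc p q := heq ▸ himsub n
      obtain ⟨s, hs, t, ht, hst⟩ := htwo c d hcd hsubpq
      refine ⟨sInf (f '' Set.Icc c d), sSup (f '' Set.Icc c d), ?_, by rw [himeq]; exact hIcc⟩
      have hfs : f s ∈ Set.Icc (sInf (f '' Set.Icc c d)) (sSup (f '' Set.Icc c d)) := by
        rw [← hIcc]; exact Set.mem_image_of_mem f hs
      have hft : f t ∈ Set.Icc (sInf (f '' Set.Icc c d)) (sSup (f '' Set.Icc c d)) := by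
        rw [← hIcc]; exact Set.mem_image_of_mem f ht
      by_contra hle; push_neg at hle
      exact hst (le_antisymm (hfs.2.trans (hle.trans hft.1)) (hft.2.trans (hle.trans hfs.1)))
  -- the bad set is null
  have hBnull : volume ({x : ℝ | ¬ Set.Icc a b ⊆ closure (forwardOrbit f x)} ∩ Set.Icc a b) = 0 := by
    have h := hrec
    rwa [MeasureTheory.ae_iff, Measure.restrict_apply' measurableSet_Icc] at h
  have hvolY : volume (Set.Icc a b) ≠ 0 := by
    intro h; rw [Real.volume_Icc, ENNReal.ofReal_eq_zero] at h; linarith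
  -- a good point
  obtain ⟨x0, hx0Y, hx0⟩ : ∃ x ∈ Set.Icc a b, Set.Icc a b ⊆ closure (forwardOrbit f x) := by
    by_contra h; push_neg at h
    refine hvolY (measure_mono_null ?_ hBnull)
    intro x hx; exact ⟨h x hx, hx⟩
  -- a return time k ≥ 1
  obtain ⟨y, hyI, hyx⟩ : ∃ y ∈ Set.Ioo a b, y ≠ x0 := by
    rcases eq_or_ne x0 ζ with h | h
    · refine ⟨(a + ζ)/2, ⟨by linarith, by linarith⟩, ?_⟩
      rw [h]; intro e; linarith
    · exact ⟨ζ, ⟨haζ, hζb⟩, h.symm⟩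
  have hyc : y ∈ closure (forwardOrbit f x0) := hx0 (Set.Ioo_subset_Icc_self hyI)
  have hV : IsOpen (Set.Ioo a b ∩ {x0}ᶜ) := isOpen_Ioo.inter isOpen_compl_singleton
  obtain ⟨z, hz1, hz2⟩ := (mem_closure_iff.mp hyc) _ hV ⟨hyI, Set.mem_compl_singleton_iff.mpr hyx⟩
  obtain ⟨k, hk⟩ := hz2
  have hk0 : k ≠ 0 := by
    rintro rfl; exact hz1.2 (Set.mem_singleton_iff.mpr (by simpa using hk.symm))
  have hkpos : 0 < k := Nat.pos_of_ne_zero hk0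
  have hzY : f^[k] x0 ∈ Set.Icc a b := by rw [hk]; exact Set.Ioo_subset_Icc_self hz1.1
  -- the connected chain A
  set A : Set ℝ := ⋃ j : ℕ, f^[j * k] '' Set.Icc a b with hA
  have hYA : Set.Icc a b ⊆ A := fun w hw => Set.mem_iUnion.mpr ⟨0, by simpa using hw⟩
  have hVpre : ∀ j : ℕ, IsPreconnected (⋃ i ≤ j, f^[i * k] '' Set.Icc a b) := by
    intro j; induction j with
    | zero =>
      simp only [Nat.le_zero, Set.iUnion_iUnion_eq_left]
      exact isPreconnected_Icc.image _ (hcont (0*k)).continuousOn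
    | succ j ih =>
      rw [Set.biUnion_le_succ]
      have harr : (j+1) * k = j * k + k := Nat.succ_mul j k
      refine IsPreconnected.union (f^[(j+1) * k] x0) ?_ (Set.mem_image_of_mem _ hx0Y) ih
        (isPreconnected_Icc.image _ (hcont _).continuousOn)
      refine Set.mem_iUnion₂.mpr ⟨j, le_rfl, ⟨f^[k] x0, hzY, ?_⟩⟩
      rw [harr]; exact (Function.iterate_add_apply f (j*k) k x0).symm
  have hApre : IsPreconnected A := by
    have hAeq : A = ⋃ j : ℕ, ⋃ i ≤ j, f^[i * k] '' Set.Icc a b := by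
      apply subset_antisymm
      · exact Set.iUnion_subset fun j x hx => Set.mem_iUnion.mpr ⟨j, Set.mem_iUnion₂.mpr ⟨j, le_rfl, hx⟩⟩
      · exact Set.iUnion_subset fun j => Set.iUnion₂_subset fun i _ => by rw [hA]; exact Set.subset_iUnion (fun j : ℕ => f^[j * k] '' Set.Icc a b) i
    rw [hAeq]
    apply isPreconnected_iUnion ?_ hVpre
    exact ⟨x0, Set.mem_iInter.mpr fun j => Set.mem_iUnion₂.mpr ⟨0, Nat.zero_le j, by simpa using hx0Y⟩⟩
  set U : Set ℝ := ⋃ n : ℕ, f^[n] '' Set.Icc a b with hUdef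
  have hArU : ∀ r : ℕ, f^[r] '' A ⊆ U := by
    intro r x hx
    obtain ⟨w, hw, rfl⟩ := hx
    obtain ⟨j, hj⟩ := Set.mem_iUnion.mp hw
    obtain ⟨y', hy', rfl⟩ := hj
    exact Set.mem_iUnion.mpr ⟨r + j*k, ⟨y', hy', Function.iterate_add_apply f r (j*k) y'⟩⟩
  have hUsub : U ⊆ ⋃ r ∈ Finset.range k, f^[r] '' A := by
    intro x hx
    obtain ⟨n, hn⟩ := Set.mem_iUnion.mp hx
    obtain ⟨y', hy', rfl⟩ := hn
    refine Set.mem_iUnion₂.mpr ⟨n % k, Finset.mem_range.mpr (Nat.mod_lt n hkpos), ?_⟩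
    refine ⟨f^[(n / k) * k] y', Set.mem_iUnion.mpr ⟨n / k, Set.mem_image_of_mem _ hy'⟩, ?_⟩
    rw [← Function.iterate_add_apply]
    congr 1
    exact Nat.mod_add_div' n k
  have hUeq : U = ⋃ r ∈ Finset.range k, f^[r] '' A :=
    subset_antisymm hUsub (Set.iUnion₂_subset fun r _ => hArU r)
  set C : Set ℝ := closure U with hCdef
  have hUpq : U ⊆ Set.Icc p q := Set.iUnion_subset himsub
  have hCr : C = ⋃ r ∈ Finset.range k, closure (f^[r] '' A) := by
    rw [hCdef, hUeq]
    exact Finset.closure_biUnion _ _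
  have hArpre : ∀ r : ℕ, IsPreconnected (f^[r] '' A) :=
    fun r => hApre.image _ (hcont r).continuousOn
  have hArne : ∀ r : ℕ, (f^[r] '' A).Nonempty :=
    fun r => ⟨f^[r] x0, Set.mem_image_of_mem _ (hYA hx0Y)⟩
  have hCrIcc : ∀ r : ℕ, closure (f^[r] '' A)
      = Set.Icc (sInf (closure (f^[r] '' A))) (sSup (closure (f^[r] '' A))) := by
    intro r
    have hsubpq : f^[r] '' A ⊆ Set.Icc p q := (hArU r).trans hUpq
    have hcomp : IsCompact (closure (f^[r] '' A)) :=
      isCompact_Icc.of_isClosed_subset isClosed_closure (closure_minimal hsubpq isClosed_Icc)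
    exact eq_Icc_of_connected_compact ⟨(hArne r).closure, (hArpre r).closure⟩ hcomp
  have hCrlt : ∀ r : ℕ, sInf (closure (f^[r] '' A)) < sSup (closure (f^[r] '' A)) := by
    intro r
    obtain ⟨c, d, hcd, heq⟩ := hnondeg r
    have hsub2 : Set.Icc c d ⊆ closure (f^[r] '' A) := by
      rw [← heq]
      exact (Set.image_mono hYA).trans subset_closure
    have h1 := hsub2 (Set.left_mem_Icc.mpr hcd.le)
    have h2 := hsub2 (Set.right_mem_Icc.mpr hcd.le)
    rw [hCrIcc r] at h1 h2
    exact h1.1.trans_lt (hcd.trans_le h2.2)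
  have hbdry : ∀ r : ℕ, closure (f^[r] '' A) \ (f^[r] '' A)
      ⊆ {sInf (closure (f^[r] '' A)), sSup (closure (f^[r] '' A))} := by
    intro r y' hy'
    by_contra hmem
    simp only [Set.mem_insert_iff, Set.mem_singleton_iff, not_or] at hmem
    have hyIcc : y' ∈ Set.Icc (sInf (closure (f^[r] '' A))) (sSup (closure (f^[r] '' A))) := by
      rw [← hCrIcc r]; exact hy'.1
    have hy1 : sInf (closure (f^[r] '' A)) < y' := lt_of_le_of_ne hyIcc.1 (Ne.symm hmem.1)
    have hy2 : y' < sSup (closure (f^[r] '' A)) := lt_of_le_of_ne hyIcc.2 hmem.2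
    have hbelow : ∃ u ∈ f^[r] '' A, u ≤ y' := by
      by_contra h; push_neg at h
      have hsub3 : closure (f^[r] '' A) ⊆ Set.Ici y' :=
        closure_minimal (fun u hu => (h u hu).le) isClosed_Ici
      have hmem2 : sInf (closure (f^[r] '' A)) ∈ closure (f^[r] '' A) := by
        have h0 := Set.left_mem_Icc.mpr (hCrlt r).le
        rwa [← hCrIcc r] at h0
      exact absurd (hsub3 hmem2) (not_le.mpr hy1)
    have habove : ∃ v ∈ f^[r] '' A, y' ≤ v := by
      by_contra h; push_neg at h
      have hsub3 : closure (f^[r] '' A) ⊆ Set.Iic y' :=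
        closure_minimal (fun u hu => (h u hu).le) isClosed_Iic
      have hmem2 : sSup (closure (f^[r] '' A)) ∈ closure (f^[r] '' A) := by
        have h0 := Set.right_mem_Icc.mpr (hCrlt r).le
        rwa [← hCrIcc r] at h0
      exact absurd (hsub3 hmem2) (not_le.mpr hy2)
    obtain ⟨u, hu, huy⟩ := hbelow
    obtain ⟨v, hv, hyv⟩ := habove
    exact hy'.2 (((hArpre r).ordConnected).out hu hv ⟨huy, hyv⟩)
  have hCUfin : (C \ U).Finite := by
    refine Set.Finite.subset (Set.Finite.biUnion (Finset.range k).finite_toSet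
      (fun r _ => (Set.finite_singleton (sSup (closure (f^[r] '' A)))).insert
        (sInf (closure (f^[r] '' A))))) ?_
    intro x hx
    have hxC := hx.1
    rw [hCr] at hxC
    obtain ⟨r, hr, hxr⟩ := Set.mem_iUnion₂.mp hxC
    have hxnot : x ∉ f^[r] '' A := fun h => hx.2 (hArU r h)
    exact Set.mem_iUnion₂.mpr ⟨r, hr, hbdry r ⟨hxr, hxnot⟩⟩
  -- Lipschitz bound and null images
  obtain ⟨L, hL⟩ : ∃ L : ℝ, ∀ x ∈ Set.Icc p q, ‖deriv f x‖ ≤ L :=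
    isCompact_Icc.exists_bound_of_continuousOn (hC1.continuous_deriv le_rfl).continuousOn
  set K : NNReal := ⟨max L 0, le_max_right _ _⟩ with hK
  have hlip : LipschitzOnWith K f (Set.Icc p q) := by
    apply Convex.lipschitzOnWith_of_nnnorm_deriv_le
      (fun x _ => (hC1.differentiable one_ne_zero).differentiableAt) ?_ (convex_Icc p q)
    intro x hx
    have : ‖deriv f x‖ ≤ (K : ℝ) := (hL x hx).trans (le_max_left _ _)
    exact_mod_cast this
  have hlipn : ∀ n : ℕ, LipschitzOnWith (K ^ n) (f^[n]) (Set.Icc p q) := by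
    intro n; induction n with
    | zero =>
      simp only [Function.iterate_zero, pow_zero]
      exact LipschitzWith.id.lipschitzOnWith
    | succ n ih =>
      rw [Function.iterate_succ']
      simpa [pow_succ'] using hlip.comp ih (hmapsn n)
  have himnull : ∀ n : ℕ, volume (f^[n] ''
      ({x : ℝ | ¬ Set.Icc a b ⊆ closure (forwardOrbit f x)} ∩ Set.Icc a b)) = 0 := by
    intro n
    exact lipOn_image_null ((hlipn n).mono (Set.inter_subset_right.trans hY)) hBnull
  set N : Set ℝ := (C \ U) ∪ ⋃ n : ℕ, f^[n] ''
      ({x : ℝ | ¬ Set.Icc a b ⊆ closure (forwardOrbit f x)} ∩ Set.Icc a b) with hN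
  have hNnull : volume N = 0 :=
    measure_union_null (hCUfin.measure_zero _) (measure_iUnion_null himnull)
  -- orbit-closure invariance
  have horb : ∀ g : ℝ, Set.Icc a b ⊆ closure (forwardOrbit f g) →
      C ⊆ closure (forwardOrbit f g) := by
    intro g hg
    refine closure_minimal (Set.iUnion_subset fun n => ?_) isClosed_closure
    induction n with
    | zero => simpa using hg
    | succ n ih =>
      have h1 : f^[n+1] '' Set.Icc a b = f '' (f^[n] '' Set.Icc a b) := by
        rw [Function.iterate_succ', Set.image_comp]
      rw [h1]
      have h3 : f '' forwardOrbit f g ⊆ forwardOrbit f g := by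
        rintro w ⟨v, ⟨i, rfl⟩, rfl⟩
        exact ⟨i+1, Function.iterate_succ_apply' f i g⟩
      calc f '' (f^[n] '' Set.Icc a b)
          ⊆ f '' closure (forwardOrbit f g) := Set.image_mono ih
        _ ⊆ closure (f '' forwardOrbit f g) := image_closure_subset_closure_image hfc
        _ ⊆ closure (forwardOrbit f g) := closure_mono h3
  refine ⟨C, rfl, ?_, ?_, ?_, ?_⟩
  · -- finite union of intervals
    refine ⟨(Finset.range k).image
      (fun r => (sInf (closure (f^[r] '' A)), sSup (closure (f^[r] '' A)))), ?_, ?_⟩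
    · intro r hr
      obtain ⟨i, _, rfl⟩ := Finset.mem_image.mp hr
      exact (hCrlt i).le
    · refine subset_antisymm ?_ ?_
      · intro x hx
        rw [hCr] at hx
        obtain ⟨r, hr, hx⟩ := Set.mem_iUnion₂.mp hx
        refine Set.mem_iUnion₂.mpr ⟨(sInf (closure (f^[r] '' A)), sSup (closure (f^[r] '' A))),
          Finset.mem_image_of_mem _ hr, ?_⟩
        rw [← hCrIcc r]; exact hx
      · intro x hx
        obtain ⟨s, hs, hx⟩ := Set.mem_iUnion₂.mp hx
        obtain ⟨r, hr, rfl⟩ := Finset.mem_image.mp hs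
        rw [hCr]
        exact Set.mem_iUnion₂.mpr ⟨r, hr, by rw [hCrIcc r]; exact hx⟩
  · -- forward invariance
    intro x hx
    have himg : f '' U ⊆ U := by
      rintro w ⟨v, hv, rfl⟩
      obtain ⟨n, hn⟩ := Set.mem_iUnion.mp hv
      obtain ⟨y', hy', rfl⟩ := hn
      exact Set.mem_iUnion.mpr ⟨n+1, ⟨y', hy', Function.iterate_succ_apply' f n y'⟩⟩
    have h1 : f x ∈ closure (f '' U) :=
      image_closure_subset_closure_image hfc (Set.mem_image_of_mem f hx)
    exact closure_mono himg h1
  · -- ζ in the interior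
    have h1 : Set.Ioo a b ⊆ C := by
      refine Set.Subset.trans Set.Ioo_subset_Icc_self ?_
      refine Set.Subset.trans ?_ subset_closure
      intro w hw; exact Set.mem_iUnion.mpr ⟨0, by simpa using hw⟩
    exact interior_maximal h1 isOpen_Ioo ⟨haζ, hζb⟩
  · -- a.e. transitivity
    have hCmeas : MeasurableSet C := by rw [hCdef]; exact isClosed_closure.measurableSet
    rw [MeasureTheory.ae_iff, Measure.restrict_apply' hCmeas]
    refine measure_mono_null ?_ hNnull
    rintro x ⟨hx1, hx2⟩
    by_contra hxN
    apply hx1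
    have hxU : x ∈ U := by
      by_contra h; exact hxN (Or.inl ⟨hx2, h⟩)
    obtain ⟨n, hn⟩ := Set.mem_iUnion.mp hxU
    obtain ⟨y0, hy0, hfy0⟩ := hn
    have hg : Set.Icc a b ⊆ closure (forwardOrbit f y0) := by
      by_contra hbad
      exact hxN (Or.inr (Set.mem_iUnion.mpr ⟨n, ⟨y0, ⟨hbad, hy0⟩, hfy0⟩⟩))
    have hCg : C ⊆ closure (forwardOrbit f y0) := horb y0 hg
    set F : Set ℝ := (fun i => f^[i] y0) '' Set.Iio n with hF
    have hFfin : F.Finite := (Set.finite_Iio n).image _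
    have horbsub : forwardOrbit f y0 ⊆ F ∪ forwardOrbit f x := by
      rintro w ⟨m, rfl⟩
      rcases lt_or_ge m n with h | h
      · exact Or.inl ⟨m, h, rfl⟩
      · refine Or.inr ⟨m - n, ?_⟩
        rw [← hfy0, ← Function.iterate_add_apply]
        congr 1
        omega
    have hCsub : C ⊆ F ∪ closure (forwardOrbit f x) := by
      intro w hw
      have h2 : closure (forwardOrbit f y0) ⊆ closure (F ∪ forwardOrbit f x) :=
        closure_mono horbsub
      have h3 : closure (F ∪ forwardOrbit f x)
          = closure F ∪ closure (forwardOrbit f x) := closure_union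
      have h4 : closure F = F := hFfin.isClosed.closure_eq
      rw [h3, h4] at h2
      exact h2 (hCg hw)
    intro w hw
    have hwC := hw
    rw [hCr] at hwC
    obtain ⟨r, hr, hwr⟩ := Set.mem_iUnion₂.mp hwC
    have hwIcc : w ∈ Set.Icc (sInf (closure (f^[r] '' A))) (sSup (closure (f^[r] '' A))) := by
      rw [← hCrIcc r]; exact hwr
    have hdense := icc_subset_closure_diff_finite (hCrlt r) hFfin hwIcc
    have hsub3 : Set.Icc (sInf (closure (f^[r] '' A))) (sSup (closure (f^[r] '' A))) \ F
        ⊆ closure (forwardOrbit f x) := by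
      intro v hv
      have hvC : v ∈ C := by
        rw [hCr]
        exact Set.mem_iUnion₂.mpr ⟨r, hr, by rw [hCrIcc r]; exact hv.1⟩
      rcases hCsub hvC with h | h
      · exact absurd h hv.2
      · exact h
    have hfin := closure_mono hsub3 hdense
    rwa [closure_closure] at hfin
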